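/- arXiv:math/0209191 — 3 statements merged into one kernel-verified Lean document; each statement's English description precedes it below -/
import Mathlib

section
/- Let n ≥ 3 and m ≥ 1. Then Q_{n,m} surjects onto a group that contains a copy of the free Burnside group of exponent m on n−1 generators: there exist a group G, a surjective group homomorphism Q_{n,m} → G, and an injective group homomorphism B_{n−1,m} → G. -/
/-- The left Nielsen transformation `λ_{ij} ∈ Aut(F_n)`: the automorphism sending the
generator `a_i` to `a_j * a_i` and fixing all other generators. -/
def nielsen {n : ℕ} (i j : Fin n) (h : i ≠ j) : MulAut (FreeGroup (Fin n)) :=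
  MonoidHom.toMulEquiv
    (FreeGroup.lift fun k => if k = i then FreeGroup.of j * FreeGroup.of i else FreeGroup.of k)
    (FreeGroup.lift fun k => if k = i then (FreeGroup.of j)⁻¹ * FreeGroup.of i else FreeGroup.of k)
    (by ext k; by_cases hk : k = i <;> simp [hk, h.symm])
    (by ext k; by_cases hk : k = i <;> simp [hk, h.symm])

/-- The quotient `Q_{n,m}` of `Aut(F_n)` by the normal closure of the `m`-th powers of all
Nielsen transformations `λ_{ij}`, `i ≠ j`. -/
def Qgrp (n m : ℕ) : Type :=
  MulAut (FreeGroup (Fin n)) ⧸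
    Subgroup.normalClosure {x | ∃ (i j : Fin n) (h : i ≠ j), x = (nielsen i j h) ^ m}

noncomputable instance (n m : ℕ) : Group (Qgrp n m) :=
  inferInstanceAs (Group (_ ⧸ _))

/-- The free Burnside group `B_{k,m}` of exponent `m` on `k` generators: the quotient of the
free group on `k` generators by the normal closure of the set of `m`-th powers. -/
def Burnside (k m : ℕ) : Type :=
  FreeGroup (Fin k) ⧸ Subgroup.normalClosure {x : FreeGroup (Fin k) | ∃ w, x = w ^ m}

noncomputable instance (k m : ℕ) : Group (Burnside k m) :=
  inferInstanceAs (Group (_ ⧸ _))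


open Subgroup QuotientGroup

namespace QAux

variable (n m : ℕ)

/-- The subgroup of `m`-th powers in the free group. -/
def NP (k m : ℕ) : Subgroup (FreeGroup (Fin k)) :=
  Subgroup.normalClosure {x : FreeGroup (Fin k) | ∃ w, x = w ^ m}

instance (k m : ℕ) : (NP k m).Normal := Subgroup.normalClosure_normal

/-- `Burnside k m` is definitionally this quotient. -/
lemma burnside_def (k m : ℕ) : Burnside k m = (FreeGroup (Fin k) ⧸ NP k m) := rfl

noncomputable def bmk (k m : ℕ) : FreeGroup (Fin k) →* Burnside k m := QuotientGroup.mk' (NP k m)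

lemma bmk_surjective (k m : ℕ) : Function.Surjective (bmk k m) := QuotientGroup.mk'_surjective _

lemma burnside_pow (k m : ℕ) (b : Burnside k m) : b ^ m = 1 := by
  obtain ⟨x, rfl⟩ := bmk_surjective k m b
  rw [← map_pow]
  rw [show ((bmk k m) (x ^ m) = 1) ↔ (x ^ m ∈ NP k m) from QuotientGroup.eq_one_iff _]
  exact Subgroup.subset_normalClosure ⟨x, rfl⟩

lemma NP_le_comap (φ : MulAut (FreeGroup (Fin n))) :
    NP n m ≤ (NP n m).comap (φ : FreeGroup (Fin n) →* FreeGroup (Fin n)) := by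
  haveI : ((NP n m).comap (φ : FreeGroup (Fin n) →* FreeGroup (Fin n))).Normal :=
    Subgroup.Normal.comap inferInstance _
  refine Subgroup.normalClosure_le_normal ?_
  rintro x ⟨w, rfl⟩
  exact Subgroup.subset_normalClosure ⟨φ w, by simp [map_pow]⟩

noncomputable def descMap (φ : MulAut (FreeGroup (Fin n))) : Burnside n m →* Burnside n m :=
  QuotientGroup.map (NP n m) (NP n m) (φ : FreeGroup (Fin n) →* FreeGroup (Fin n))
    (NP_le_comap n m φ)

lemma descMap_mk (φ : MulAut (FreeGroup (Fin n))) (x : FreeGroup (Fin n)) :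
    descMap n m φ (bmk n m x) = bmk n m (φ x) :=
  QuotientGroup.map_mk _ _ _ _ _

/-- The natural map `Aut(F_n) → Aut(B_{n,m})`. -/
noncomputable def psi : MulAut (FreeGroup (Fin n)) →* MulAut (Burnside n m) where
  toFun φ :=
    { toFun := descMap n m φ
      invFun := descMap n m φ⁻¹
      left_inv := fun b => by
        induction b using QuotientGroup.induction_on with
        | _ x =>
          show descMap n m φ⁻¹ (descMap n m φ (bmk n m x)) = bmk n m x
          rw [descMap_mk, descMap_mk]; exact congrArg _ (φ.symm_apply_apply x)
      right_inv := fun b => by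
        induction b using QuotientGroup.induction_on with
        | _ x =>
          show descMap n m φ (descMap n m φ⁻¹ (bmk n m x)) = bmk n m x
          rw [descMap_mk, descMap_mk]; exact congrArg _ (φ.apply_symm_apply x)
      map_mul' := map_mul _ }
  map_one' := by
    refine MulEquiv.ext fun b => ?_
    induction b using QuotientGroup.induction_on with
    | _ x => exact descMap_mk n m 1 x
  map_mul' φ φ' := by
    refine MulEquiv.ext fun b => ?_
    induction b using QuotientGroup.induction_on with
    | _ x =>
      show descMap n m (φ * φ') (bmk n m x) = descMap n m φ (descMap n m φ' (bmk n m x))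
      rw [descMap_mk, descMap_mk, descMap_mk]; rfl

lemma psi_apply_mk (φ : MulAut (FreeGroup (Fin n))) (x : FreeGroup (Fin n)) :
    psi n m φ (bmk n m x) = bmk n m (φ x) := descMap_mk n m φ x

end QAux

namespace QAux

lemma nielsen_apply_of {n : ℕ} (i j : Fin n) (h : i ≠ j) (k : Fin n) :
    nielsen i j h (FreeGroup.of k) =
      if k = i then FreeGroup.of j * FreeGroup.of i else FreeGroup.of k := by
  show (FreeGroup.lift fun k => if k = i then FreeGroup.of j * FreeGroup.of i
      else FreeGroup.of k) (FreeGroup.of k) = _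
  rw [FreeGroup.lift_apply_of]

lemma nielsen_pow_of_ne {n : ℕ} (i j : Fin n) (h : i ≠ j) (p : ℕ) (k : Fin n) (hk : k ≠ i) :
    (nielsen i j h ^ p) (FreeGroup.of k) = FreeGroup.of k := by
  induction p with
  | zero => rfl
  | succ p ih =>
    rw [pow_succ, MulAut.mul_apply, nielsen_apply_of, if_neg hk, ih]

lemma nielsen_pow_of_self {n : ℕ} (i j : Fin n) (h : i ≠ j) (p : ℕ) :
    (nielsen i j h ^ p) (FreeGroup.of i) = FreeGroup.of j ^ p * FreeGroup.of i := by
  induction p with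
  | zero => simp
  | succ p ih =>
    rw [pow_succ', MulAut.mul_apply, ih, map_mul, map_pow, nielsen_apply_of i j h j,
      if_neg h.symm, nielsen_apply_of i j h i, if_pos rfl, ← mul_assoc, ← pow_succ]

variable (n m : ℕ)

lemma psi_nielsen_pow (i j : Fin n) (h : i ≠ j) : psi n m (nielsen i j h ^ m) = 1 := by
  have key : (bmk n m).comp ((nielsen i j h ^ m : MulAut (FreeGroup (Fin n))) :
      FreeGroup (Fin n) →* FreeGroup (Fin n)) = bmk n m := by
    refine FreeGroup.ext_hom _ _ fun k => ?_
    show bmk n m ((nielsen i j h ^ m) (FreeGroup.of k)) = bmk n m (FreeGroup.of k)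
    by_cases hk : k = i
    · subst hk
      rw [nielsen_pow_of_self, map_mul, map_pow, burnside_pow, one_mul]
    · rw [nielsen_pow_of_ne i j h m k hk]
  refine MulEquiv.ext fun b => ?_
  induction b using QuotientGroup.induction_on with
  | _ x =>
    show psi n m (nielsen i j h ^ m) (bmk n m x) = bmk n m x
    rw [psi_apply_mk]
    exact DFunLike.congr_fun key x

lemma psi_ker_cond :
    Subgroup.normalClosure {x | ∃ (i j : Fin n) (h : i ≠ j), x = (nielsen i j h) ^ m} ≤
      (psi n m).ker := by
  refine Subgroup.normalClosure_le_normal ?_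
  rintro x ⟨i, j, h, rfl⟩
  exact psi_nielsen_pow n m i j h

noncomputable def f0 : Qgrp n m →* MulAut (Burnside n m) :=
  QuotientGroup.lift _ (psi n m) (psi_ker_cond n m)

lemma f0_mk (φ : MulAut (FreeGroup (Fin n))) : f0 n m (QuotientGroup.mk φ) = psi n m φ := rfl

lemma f0_surjective_range : ∀ ψ' ∈ (psi n m).range, ψ' ∈ (f0 n m).range := by
  rintro _ ⟨φ, rfl⟩
  exact ⟨QuotientGroup.mk φ, rfl⟩

end QAux

namespace QAux

variable (n m : ℕ) (hn : 3 ≤ n)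

def i0 : Fin n := ⟨n - 1, by omega⟩

def e (k : Fin (n - 1)) : Fin n := ⟨k, by omega⟩

lemma e_ne_i0 (k : Fin (n - 1)) : e n hn k ≠ i0 n hn := by
  intro hc
  have := congrArg Fin.val hc
  simp only [e, i0] at this
  have := k.2
  omega

/-- Lift of `F_{n-1}` into `Aut(F_n)` via (inverse) Nielsen transformations based at `a_{i0}`. -/
noncomputable def Lam : FreeGroup (Fin (n - 1)) →* MulAut (FreeGroup (Fin n)) :=
  FreeGroup.lift fun k => (nielsen (i0 n hn) (e n hn k) (e_ne_i0 n hn k).symm)⁻¹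

noncomputable def iot : FreeGroup (Fin (n - 1)) →* MulAut (Burnside n m) :=
  (psi n m).comp (Lam n hn)

lemma Lam_of (k : Fin (n - 1)) :
    Lam n hn (FreeGroup.of k) = (nielsen (i0 n hn) (e n hn k) (e_ne_i0 n hn k).symm)⁻¹ :=
  FreeGroup.lift_apply_of

lemma iot_of (k : Fin (n - 1)) :
    iot n m hn (FreeGroup.of k) =
      psi n m (nielsen (i0 n hn) (e n hn k) (e_ne_i0 n hn k).symm)⁻¹ := by
  show psi n m (Lam n hn (FreeGroup.of k)) = _
  rw [Lam_of, map_inv]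

lemma nielsen_inv_apply_of {N : ℕ} (i j : Fin N) (h : i ≠ j) (k : Fin N) :
    (nielsen i j h)⁻¹ (FreeGroup.of k) =
      if k = i then (FreeGroup.of j)⁻¹ * FreeGroup.of i else FreeGroup.of k := by
  show (FreeGroup.lift fun k => if k = i then (FreeGroup.of j)⁻¹ * FreeGroup.of i
      else FreeGroup.of k) (FreeGroup.of k) = _
  rw [FreeGroup.lift_apply_of]

noncomputable def hB0 : FreeGroup (Fin (n - 1)) →* Burnside n m :=
  FreeGroup.lift fun k => bmk n m (FreeGroup.of (e n hn k))

lemma hB0_of (k : Fin (n - 1)) :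
    hB0 n m hn (FreeGroup.of k) = bmk n m (FreeGroup.of (e n hn k)) :=
  FreeGroup.lift_apply_of

lemma iot_fix (w : FreeGroup (Fin (n - 1))) (l : Fin n) (hl : l ≠ i0 n hn) :
    iot n m hn w (bmk n m (FreeGroup.of l)) = bmk n m (FreeGroup.of l) := by
  induction w using FreeGroup.induction_on with
  | C1 => rw [map_one]; rfl
  | of k =>
    show iot n m hn (FreeGroup.of k) (bmk n m (FreeGroup.of l)) = bmk n m (FreeGroup.of l)
    rw [iot_of, map_inv]
    show psi n m (nielsen (i0 n hn) (e n hn k) (e_ne_i0 n hn k).symm)⁻¹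
        (bmk n m (FreeGroup.of l)) = _
    rw [psi_apply_mk, nielsen_inv_apply_of, if_neg hl]
  | inv_of k ih =>
    have ih' : iot n m hn (FreeGroup.of k) (bmk n m (FreeGroup.of l))
        = bmk n m (FreeGroup.of l) := ih
    rw [map_inv]
    show (iot n m hn (FreeGroup.of k)).symm (bmk n m (FreeGroup.of l)) = _
    rw [MulEquiv.symm_apply_eq]
    exact ih'.symm
  | mul x y ihx ihy =>
    rw [map_mul, MulAut.mul_apply, ihy, ihx]

lemma iot_fix_hB0 (w u : FreeGroup (Fin (n - 1))) :
    iot n m hn w (hB0 n m hn u) = hB0 n m hn u := by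
  have key : ((iot n m hn w : MulAut (Burnside n m)) :
      Burnside n m →* Burnside n m).comp (hB0 n m hn) = hB0 n m hn := by
    refine FreeGroup.ext_hom _ _ fun k => ?_
    show iot n m hn w (hB0 n m hn (FreeGroup.of k)) = hB0 n m hn (FreeGroup.of k)
    rw [hB0_of]
    exact iot_fix n m hn w _ (e_ne_i0 n hn k)
  exact DFunLike.congr_fun key u

lemma iot_main (w : FreeGroup (Fin (n - 1))) :
    iot n m hn w (bmk n m (FreeGroup.of (i0 n hn))) =
      (hB0 n m hn w)⁻¹ * bmk n m (FreeGroup.of (i0 n hn)) := by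
  induction w using FreeGroup.induction_on with
  | C1 => rw [map_one, map_one, inv_one, one_mul]; rfl
  | of k =>
    show iot n m hn (FreeGroup.of k) (bmk n m (FreeGroup.of (i0 n hn))) =
      (hB0 n m hn (FreeGroup.of k))⁻¹ * bmk n m (FreeGroup.of (i0 n hn))
    rw [iot_of, map_inv]
    show psi n m (nielsen (i0 n hn) (e n hn k) (e_ne_i0 n hn k).symm)⁻¹
        (bmk n m (FreeGroup.of (i0 n hn))) = _
    rw [psi_apply_mk, nielsen_inv_apply_of, if_pos rfl, map_mul, map_inv, hB0_of]
  | inv_of k _ =>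
    show iot n m hn ((FreeGroup.of k)⁻¹) (bmk n m (FreeGroup.of (i0 n hn))) =
      (hB0 n m hn ((FreeGroup.of k)⁻¹))⁻¹ * bmk n m (FreeGroup.of (i0 n hn))
    rw [map_inv, iot_of, ← map_inv, inv_inv, psi_apply_mk, nielsen_apply_of, if_pos rfl,
      map_mul, map_inv, inv_inv, hB0_of]
  | mul x y ihx ihy =>
    rw [map_mul, MulAut.mul_apply, ihy, map_mul, map_inv, iot_fix_hB0, ihx,
      map_mul, mul_inv_rev, mul_assoc]

lemma iot_pow_ker (w : FreeGroup (Fin (n - 1))) : iot n m hn (w ^ m) = 1 := by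
  have key : ∀ l : Fin n, iot n m hn (w ^ m) (bmk n m (FreeGroup.of l))
      = bmk n m (FreeGroup.of l) := by
    intro l
    by_cases hl : l = i0 n hn
    · subst hl
      rw [iot_main, map_pow, burnside_pow, inv_one, one_mul]
    · exact iot_fix n m hn _ l hl
  have key2 : ((iot n m hn (w ^ m) : MulAut (Burnside n m)) :
      Burnside n m →* Burnside n m).comp (bmk n m) = bmk n m :=
    FreeGroup.ext_hom _ _ key
  refine MulEquiv.ext fun b => ?_
  induction b using QuotientGroup.induction_on with
  | _ x => exact DFunLike.congr_fun key2 x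

noncomputable def gbar : Burnside (n - 1) m →* MulAut (Burnside n m) :=
  QuotientGroup.lift (NP (n - 1) m) (iot n m hn) (by
    refine Subgroup.normalClosure_le_normal ?_
    rintro x ⟨w, rfl⟩
    rw [SetLike.mem_coe, MonoidHom.mem_ker]
    exact iot_pow_ker n m hn w)

lemma gbar_mk (w : FreeGroup (Fin (n - 1))) :
    gbar n m hn (bmk (n - 1) m w) = iot n m hn w := rfl

noncomputable def r0 : FreeGroup (Fin n) →* Burnside (n - 1) m :=
  FreeGroup.lift fun l => if h : (l : ℕ) < n - 1
    then bmk (n - 1) m (FreeGroup.of ⟨l, h⟩) else 1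

noncomputable def rr : Burnside n m →* Burnside (n - 1) m :=
  QuotientGroup.lift (NP n m) (r0 n m) (by
    refine Subgroup.normalClosure_le_normal ?_
    rintro x ⟨w, rfl⟩
    rw [SetLike.mem_coe, MonoidHom.mem_ker, map_pow]
    exact burnside_pow (n - 1) m _)

lemma rr_hB0 : (rr n m).comp (hB0 n m hn) = bmk (n - 1) m := by
  refine FreeGroup.ext_hom _ _ fun k => ?_
  show rr n m (hB0 n m hn (FreeGroup.of k)) = bmk (n - 1) m (FreeGroup.of k)
  rw [hB0_of]
  show r0 n m (FreeGroup.of (e n hn k)) = bmk (n - 1) m (FreeGroup.of k)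
  rw [r0, FreeGroup.lift_apply_of, dif_pos (show ((e n hn k : Fin n) : ℕ) < n - 1 from k.2)]
  rfl

lemma gbar_inj : Function.Injective (gbar n m hn) := by
  rw [injective_iff_map_eq_one]
  intro a ha
  induction a using QuotientGroup.induction_on with
  | _ w =>
    have hw : iot n m hn w = 1 := by rw [← gbar_mk n m hn w]; exact ha
    have h1 : (hB0 n m hn w)⁻¹ * bmk n m (FreeGroup.of (i0 n hn))
        = bmk n m (FreeGroup.of (i0 n hn)) := by
      rw [← iot_main, hw]; rfl
    have h2 : hB0 n m hn w = 1 := by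
      have := mul_right_cancel (h1.trans (one_mul _).symm)
      rwa [inv_eq_one] at this
    have h3 : bmk (n - 1) m w = 1 := by
      have := congrArg (rr n m) h2
      rwa [show rr n m (hB0 n m hn w) = bmk (n - 1) m w from
        DFunLike.congr_fun (rr_hB0 n m hn) w, map_one] at this
    exact h3

lemma gbar_mem_range (a : Burnside (n - 1) m) : gbar n m hn a ∈ (f0 n m).range := by
  induction a using QuotientGroup.induction_on with
  | _ w => exact ⟨QuotientGroup.mk (Lam n hn w), rfl⟩

end QAux


/-- **Proposition F.** For `n ≥ 3` and `m ≥ 1`, the group `Q_{n,m}` surjects onto a group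
that contains a copy of the free Burnside group of exponent `m` on `n - 1` generators. -/
theorem Qgrp_surjects_onto_group_containing_burnside (n m : ℕ) (hn : 3 ≤ n) (hm : 1 ≤ m) :
    ∃ (G : Type) (_ : Group G) (f : Qgrp n m →* G) (g : Burnside (n - 1) m →* G),
      Function.Surjective f ∧ Function.Injective g := by
  refine ⟨(QAux.f0 n m).range, inferInstance, (QAux.f0 n m).rangeRestrict,
    (QAux.gbar n m hn).codRestrict _ (QAux.gbar_mem_range n m hn),
    (QAux.f0 n m).rangeRestrict_surjective, ?_⟩
  intro a b hab
  exact QAux.gbar_inj n m hn (Subtype.ext_iff.mp hab)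
end

section
/- In any group, if elements a and b satisfy a b a⁻¹ = b² and b a^r b⁻¹ = a^s for natural numbers r ≠ s, then b has finite order. -/
/-- In any group, if elements `a` and `b` satisfy `a b a⁻¹ = b²` and `b aʳ b⁻¹ = aˢ` for
natural numbers `r ≠ s`, then `b` has finite order. -/
theorem finite_order_of_conj_relations {G : Type*} [Group G] (a b : G) (r s : ℕ)
    (hrs : r ≠ s) (h1 : a * b * a⁻¹ = b ^ 2) (h2 : b * a ^ r * b⁻¹ = a ^ s) :
    IsOfFinOrder b := by
  have key : ∀ n : ℕ, a ^ n * b * (a ^ n)⁻¹ = b ^ (2 ^ n) := by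
    intro n
    induction n with
    | zero => simp
    | succ n ih =>
      have : a ^ (n + 1) * b * (a ^ (n + 1))⁻¹
          = a * (a ^ n * b * (a ^ n)⁻¹) * a⁻¹ := by
        rw [pow_succ']
        group
      rw [this, ih, ← conj_pow, h1, ← pow_mul, pow_succ, mul_comm (2 ^ n) 2]
  -- b ^ (2 ^ s) = b ^ (2 ^ r)
  have heq : b ^ (2 ^ s) = b ^ (2 ^ r) := by
    have hs : a ^ s * b * (a ^ s)⁻¹ = b * (a ^ r * b * (a ^ r)⁻¹) * b⁻¹ := by
      rw [← h2]; group
    rw [key, key, ← conj_pow] at hs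
    -- hs : b ^ 2 ^ s = b * b ^ 2 ^ r * b⁻¹
    rw [hs]; group
  -- derive finite order
  rcases hrs.lt_or_gt with h | h
  · refine isOfFinOrder_iff_pow_eq_one.2 ⟨2 ^ s - 2 ^ r, ?_, ?_⟩
    · exact Nat.sub_pos_of_lt (Nat.pow_lt_pow_right one_lt_two h)
    · rw [pow_sub b (Nat.pow_le_pow_right (by norm_num) h.le), heq, mul_inv_cancel]
  · refine isOfFinOrder_iff_pow_eq_one.2 ⟨2 ^ r - 2 ^ s, ?_, ?_⟩
    · exact Nat.sub_pos_of_lt (Nat.pow_lt_pow_right one_lt_two h)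
    · rw [pow_sub b (Nat.pow_le_pow_right (by norm_num) h.le), ← heq, mul_inv_cancel]
end

section
/- Let n ≥ 3. All Nielsen transformations with respect to the fixed basis are conjugate in Aut(F_n): for any pairs of distinct indices (i, j) and (k, l), the left Nielsen move λ_{ij} is conjugate in Aut(F_n) to the left Nielsen move λ_{kl} and also to the right Nielsen move ρ_{kl}. -/
/-- The right Nielsen transformation `ρ_{ij} ∈ Aut(F_n)`: the automorphism sending the
generator `a_i` to `a_i * a_j` and fixing all other generators. -/
def rnielsen {n : ℕ} (i j : Fin n) (h : i ≠ j) : MulAut (FreeGroup (Fin n)) :=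
  MonoidHom.toMulEquiv
    (FreeGroup.lift fun k => if k = i then FreeGroup.of i * FreeGroup.of j else FreeGroup.of k)
    (FreeGroup.lift fun k => if k = i then FreeGroup.of i * (FreeGroup.of j)⁻¹ else FreeGroup.of k)
    (by ext k; by_cases hk : k = i <;> simp [hk, h.symm])
    (by ext k; by_cases hk : k = i <;> simp [hk, h.symm])

lemma nielsen_apply_of {n : ℕ} (i j : Fin n) (h : i ≠ j) (x : Fin n) :
    nielsen i j h (FreeGroup.of x) =
      if x = i then FreeGroup.of j * FreeGroup.of i else FreeGroup.of x := by
  simp [nielsen, MonoidHom.toMulEquiv]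

lemma rnielsen_apply_of {n : ℕ} (i j : Fin n) (h : i ≠ j) (x : Fin n) :
    rnielsen i j h (FreeGroup.of x) =
      if x = i then FreeGroup.of i * FreeGroup.of j else FreeGroup.of x := by
  simp [rnielsen, MonoidHom.toMulEquiv]

/-- The automorphism inverting the generators `a_k` and `a_l`, fixing the others. -/
def invAut {n : ℕ} (k l : Fin n) : MulAut (FreeGroup (Fin n)) :=
  MonoidHom.toMulEquiv
    (FreeGroup.lift fun x => if x = k ∨ x = l then (FreeGroup.of x)⁻¹ else FreeGroup.of x)
    (FreeGroup.lift fun x => if x = k ∨ x = l then (FreeGroup.of x)⁻¹ else FreeGroup.of x)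
    (by ext x; by_cases hx : x = k ∨ x = l <;> simp [hx])
    (by ext x; by_cases hx : x = k ∨ x = l <;> simp [hx])

lemma invAut_apply_of {n : ℕ} (k l : Fin n) (x : Fin n) :
    invAut k l (FreeGroup.of x) =
      if x = k ∨ x = l then (FreeGroup.of x)⁻¹ else FreeGroup.of x := by
  simp [invAut, MonoidHom.toMulEquiv]

lemma mulAut_ext {n : ℕ} (f g : MulAut (FreeGroup (Fin n)))
    (h : ∀ x, f (FreeGroup.of x) = g (FreeGroup.of x)) : f = g :=
  MulEquiv.toMonoidHom_injective (FreeGroup.ext_hom _ _ h)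

/-- All Nielsen transformations with respect to the fixed basis are conjugate in `Aut(F_n)`
(`n ≥ 3`): each left Nielsen move `λ_{ij}` is conjugate to each left Nielsen move `λ_{kl}`
and to each right Nielsen move `ρ_{kl}`. -/
theorem nielsen_moves_conjugate (n : ℕ) (hn : 3 ≤ n)
    (i j k l : Fin n) (hij : i ≠ j) (hkl : k ≠ l) :
    IsConj (nielsen i j hij) (nielsen k l hkl) ∧
    IsConj (nielsen i j hij) (rnielsen k l hkl) := by
  -- a permutation sending i ↦ k, j ↦ l
  set j' : Fin n := Equiv.swap i k j with hj'
  have hkj' : k ≠ j' := by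
    rcases eq_or_ne j k with rfl | hjk
    · rw [hj', Equiv.swap_apply_right]
      exact hij.symm
    · rw [hj', Equiv.swap_apply_of_ne_of_ne hij.symm hjk]
      exact hjk.symm
  set e : Equiv.Perm (Fin n) := (Equiv.swap i k).trans (Equiv.swap j' l) with he
  have hei : e i = k := by
    rw [he]
    simp only [Equiv.trans_apply, Equiv.swap_apply_left]
    exact Equiv.swap_apply_of_ne_of_ne hkj' hkl
  have hej : e j = l := by
    rw [he]
    simp only [Equiv.trans_apply, ← hj', Equiv.swap_apply_left]
  have h1 : IsConj (nielsen i j hij) (nielsen k l hkl) := by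
    rw [isConj_iff]
    refine ⟨FreeGroup.freeGroupCongr e, ?_⟩
    rw [mul_inv_eq_iff_eq_mul]
    refine mulAut_ext _ _ fun x => ?_
    rw [MulAut.mul_apply, MulAut.mul_apply]
    by_cases hx : x = i
    · subst hx
      simp [nielsen_apply_of, hei, hej]
    · have hex : e x ≠ k := by
        rw [← hei]; exact fun hc => hx (e.injective hc)
      simp [nielsen_apply_of, hx, hex]
  have h2 : IsConj (nielsen k l hkl) (rnielsen k l hkl) := by
    rw [isConj_iff]
    refine ⟨invAut k l, ?_⟩
    rw [mul_inv_eq_iff_eq_mul]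
    refine mulAut_ext _ _ fun x => ?_
    rw [MulAut.mul_apply, MulAut.mul_apply]
    by_cases hx : x = k
    · subst hx
      simp [nielsen_apply_of, rnielsen_apply_of, invAut_apply_of, hkl, hkl.symm, mul_comm]
    · by_cases hxl : x = l
      · subst hxl
        simp [nielsen_apply_of, rnielsen_apply_of, invAut_apply_of, hkl.symm]
      · simp [nielsen_apply_of, rnielsen_apply_of, invAut_apply_of, hx, hxl]
  exact ⟨h1, h1.trans h2⟩
end
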